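/- Let T0 = LI([0,1]) be linear arithmetic over the interval [0,1], and let T = T0 ∪ K be its extension with a unary function symbol f satisfying K = { ∀x∀y (x ≤ y → f(x) ≤ f(y)), ∀x (f(x) ≤ 1) }. Let G = (a ≤ b) ∧ (b ≤ f(b)). Then G has no T-general uniform interpolant w.r.t. Σ_s ∪ C_s for Σ_s = {f} and C_s = {a}: (i) G ⊨_T a ≤ fⁿ(1) for every n ∈ ℕ, yet (ii) for every quantifier-free formula ψ over the signature of T0 extended with f and the constant a, if k is such that f^{k+1}(1) does not occur in ψ and G ⊨_T ψ, then ψ ⊭_T a ≤ f^{k+1}(1); hence no finite formula satisfies both defining conditions of a T-general uniform interpolant of G w.r.t. {f, a}. -/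

import Mathlib

/- Common framework: first-order signatures with designated sets of interpreted symbols,
uninterpreted (extension) function symbols and fresh constants, clauses, flatness/linearity,
instances, locality of theory extensions, (general) uniform interpolants, and a semantic
specification of the symbol-elimination Algorithm 1 of the paper. -/

open FirstOrder FirstOrder.Language

namespace PaperSE

variable {L : FirstOrder.Language.{0, 0}}

/-- A function symbol of `L` together with its arity. Constants are the arity-0 symbols. -/
abbrev Sym (L : FirstOrder.Language.{0, 0}) : Type := Σ n : ℕ, L.Functions n

/-- Ground terms (no variables; constants are `0`-ary function symbols of `L`). -/
abbrev GTerm (L : FirstOrder.Language.{0, 0}) : Type := L.Term Empty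

/-- A ground term viewed as a term with variables from `α`. -/
def GTerm.cast {α : Type} (t : GTerm L) : L.Term α := Term.relabel Empty.elim t

/-- The term `c()` for a constant symbol `c`. -/
def constT (c : L.Functions 0) : GTerm L := Term.func c (fun j => j.elim0)

/- ### Structures, with the interpretation passed explicitly -/

def FunM (M : Type) (S : L.Structure M) {n : ℕ} (f : L.Functions n) (x : Fin n → M) : M := by
  letI := S; exact Structure.funMap f x

def RelM (M : Type) (S : L.Structure M) {n : ℕ} (r : L.Relations n) (x : Fin n → M) : Prop := by
  letI := S; exact Structure.RelMap r x

def TVal (M : Type) (S : L.Structure M) {α : Type} (v : α → M) (t : L.Term α) : M := by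
  letI := S; exact t.realize v

/-- Value of a ground term. -/
def GVal (M : Type) (S : L.Structure M) (t : GTerm L) : M :=
  TVal M S (fun e : Empty => e.elim) t

def RealizeF (M : Type) (S : L.Structure M) {α : Type} (φ : L.Formula α) (v : α → M) : Prop := by
  letI := S; exact φ.Realize v

def RealizeSent (M : Type) (S : L.Structure M) (φ : L.Sentence) : Prop :=
  RealizeF M S φ (fun e : Empty => e.elim)

def ModelsT (M : Type) (S : L.Structure M) (T : L.Theory) : Prop :=
  ∀ φ ∈ T, RealizeSent M S φ

/- ### Symbols and ground terms occurring in terms and formulas -/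

/-- The set of subterms of a term. -/
def subterms {α : Type} : L.Term α → Set (L.Term α)
  | .var a => {Term.var a}
  | .func f ts => insert (Term.func f ts) (⋃ i, subterms (ts i))

/-- The function (and constant) symbols occurring in a term. -/
def termSyms {α : Type} : L.Term α → Set (Sym L)
  | .var _ => ∅
  | .func f ts => insert ⟨_, f⟩ (⋃ i, termSyms (ts i))

/-- The list of occurrences of variables in a term. -/
def varOccs {α : Type} : L.Term α → List α
  | .var a => [a]
  | .func _ ts => (List.finRange _).flatMap (fun i => varOccs (ts i))

/-- The list of occurrences of constant symbols in a ground term. -/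
def constOccs : GTerm L → List (L.Functions 0)
  | .var e => e.elim
  | .func (l := n) f ts =>
      if h : n = 0 then [h ▸ f]
      else (List.finRange n).flatMap (fun i => constOccs (ts i))

/-- Does the term start with a function symbol from `F`? -/
def rootIn (F : Set (Sym L)) {α : Type} : L.Term α → Prop
  | .var _ => False
  | .func f _ => (⟨_, f⟩ : Sym L) ∈ F

/-- The function (and constant) symbols occurring in a bounded formula. -/
def bfSyms {α : Type} : ∀ {n : ℕ}, L.BoundedFormula α n → Set (Sym L)
  | _, .falsum => ∅
  | _, .equal t u => termSyms t ∪ termSyms u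
  | _, .rel _ ts => ⋃ i, termSyms (ts i)
  | _, .imp f g => bfSyms f ∪ bfSyms g
  | _, .all f => bfSyms f

abbrev sentSyms (s : L.Sentence) : Set (Sym L) := bfSyms s

def theorySyms (T : L.Theory) : Set (Sym L) := ⋃ s ∈ T, sentSyms s

/-- The ground terms occurring in a bounded formula. -/
def bfGTerms {α : Type} : ∀ {n : ℕ}, L.BoundedFormula α n → Set (GTerm L)
  | _, .falsum => ∅
  | _, .equal t u => {g | GTerm.cast g ∈ subterms t ∨ GTerm.cast g ∈ subterms u}
  | _, .rel _ ts => {g | ∃ i, GTerm.cast g ∈ subterms (ts i)}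
  | _, .imp f g => bfGTerms f ∪ bfGTerms g
  | _, .all f => bfGTerms f

abbrev sentGTerms (s : L.Sentence) : Set (GTerm L) := bfGTerms s

/- ### Literals and clauses -/

/-- Literals over variables `α`. -/
inductive Lit (L : FirstOrder.Language.{0, 0}) (α : Type) : Type where
  | eq (t u : L.Term α)
  | neq (t u : L.Term α)
  | rel {n : ℕ} (R : L.Relations n) (ts : Fin n → L.Term α)
  | nrel {n : ℕ} (R : L.Relations n) (ts : Fin n → L.Term α)

namespace Lit

def terms {α : Type} : Lit L α → Set (L.Term α)
  | eq t u => {t, u}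
  | neq t u => {t, u}
  | rel _ ts => Set.range ts
  | nrel _ ts => Set.range ts

/-- An atom (positive literal). -/
def Positive {α : Type} : Lit L α → Prop
  | eq _ _ => True
  | rel _ _ => True
  | _ => False

def subst {α β : Type} (σ : α → L.Term β) : Lit L α → Lit L β
  | eq t u => eq (t.subst σ) (u.subst σ)
  | neq t u => neq (t.subst σ) (u.subst σ)
  | rel R ts => rel R (fun i => (ts i).subst σ)
  | nrel R ts => nrel R (fun i => (ts i).subst σ)

def Realize (M : Type) (S : L.Structure M) {α : Type} (v : α → M) : Lit L α → Prop
  | eq t u => TVal M S v t = TVal M S v u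
  | neq t u => TVal M S v t ≠ TVal M S v u
  | rel R ts => RelM M S R (fun i => TVal M S v (ts i))
  | nrel R ts => ¬ RelM M S R (fun i => TVal M S v (ts i))

def syms {α : Type} (l : Lit L α) : Set (Sym L) := ⋃ t ∈ l.terms, termSyms t

end Lit

/-- A (universally closed) clause: a disjunction of literals with variables `Fin nvars`,
viewed as universally quantified. -/
structure Clause (L : FirstOrder.Language.{0, 0}) : Type where
  nvars : ℕ
  lits : List (Lit L (Fin nvars))

/-- A ground clause: a disjunction of ground literals. -/
abbrev GClause (L : FirstOrder.Language.{0, 0}) : Type := List (Lit L Empty)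

def Clause.instantiate (C : Clause L) (σ : Fin C.nvars → GTerm L) : GClause L :=
  C.lits.map (Lit.subst σ)

def Clause.syms (C : Clause L) : Set (Sym L) := ⋃ l ∈ C.lits, Lit.syms l

def GClause.syms (C : GClause L) : Set (Sym L) := ⋃ l ∈ C, Lit.syms l

def GClause.gterms (C : GClause L) : Set (GTerm L) := ⋃ l ∈ C, ⋃ t ∈ Lit.terms l, subterms t

def ClausesSyms (K : Set (Clause L)) : Set (Sym L) := ⋃ C ∈ K, C.syms

def GSyms (G : Set (GClause L)) : Set (Sym L) := ⋃ C ∈ G, GClause.syms C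

def GTerms (G : Set (GClause L)) : Set (GTerm L) := ⋃ C ∈ G, GClause.gterms C

/- ### Satisfaction -/

def ClauseHolds (M : Type) (S : L.Structure M) (C : Clause L) : Prop :=
  ∀ v : Fin C.nvars → M, ∃ l ∈ C.lits, Lit.Realize M S v l

def GClauseHolds (M : Type) (S : L.Structure M) (C : GClause L) : Prop :=
  ∃ l ∈ C, Lit.Realize M S (fun e : Empty => e.elim) l

def ModelsK (M : Type) (S : L.Structure M) (K : Set (Clause L)) : Prop :=
  ∀ C ∈ K, ClauseHolds M S C

def ModelsG (M : Type) (S : L.Structure M) (G : Set (GClause L)) : Prop :=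
  ∀ C ∈ G, GClauseHolds M S C

/-- Satisfiability (in the joint signature) of base theory `T0`, clause set `K`
and ground clauses `G`. -/
def SatTKG (T0 : L.Theory) (K : Set (Clause L)) (G : Set (GClause L)) : Prop :=
  ∃ (M : Type) (_ : Nonempty M) (S : L.Structure M),
    ModelsT M S T0 ∧ ModelsK M S K ∧ ModelsG M S G

/-- `G ⊨_{T0 ∪ K} θ` for a sentence `θ`. -/
def EntailsC (T0 : L.Theory) (K : Set (Clause L)) (G : Set (GClause L)) (θ : L.Sentence) : Prop :=
  ∀ (M : Type) (S : L.Structure M), Nonempty M →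
    ModelsT M S T0 → ModelsK M S K → ModelsG M S G → RealizeSent M S θ

/-- `A ⊨_{T0 ∪ K} θ` for sentences `A`, `θ`. -/
def EntailsS (T0 : L.Theory) (K : Set (Clause L)) (A θ : L.Sentence) : Prop :=
  ∀ (M : Type) (S : L.Structure M), Nonempty M →
    ModelsT M S T0 → ModelsK M S K → RealizeSent M S A → RealizeSent M S θ

/- ### Extension ground terms and instances -/

/-- `est(K, G)`: the ground terms starting with a function symbol in `F`
occurring in `K` or in `G`. -/
def estKG (F : Set (Sym L)) (K : Set (Clause L)) (G : Set (GClause L)) : Set (GTerm L) :=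
  { t | rootIn F t ∧
      ((∃ C ∈ K, ∃ l ∈ C.lits, ∃ s ∈ Lit.terms l, GTerm.cast t ∈ subterms s) ∨
       (∃ C ∈ G, t ∈ GClause.gterms C)) }

/-- `K[Tt]`: the set of ground instances of clauses of `K` all of whose terms starting
with a function symbol in `F` belong to `Tt`. -/
def instancesIn (F : Set (Sym L)) (K : Set (Clause L)) (Tt : Set (GTerm L)) :
    Set (GClause L) :=
  { D | ∃ C ∈ K, ∃ σ : Fin C.nvars → GTerm L, D = C.instantiate σ ∧
      ∀ t ∈ GClause.gterms (C.instantiate σ), rootIn F t → t ∈ Tt }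

/- ### Locality -/

/-- Locality of the extension of the theory `T0` together with base clauses `K0`
by the clauses `K`, with extension symbols `F`. -/
def LocalExt2 (F : Set (Sym L)) (T0 : L.Theory) (K0 K : Set (Clause L)) : Prop :=
  ∀ G : Set (GClause L), G.Finite →
    ((¬ ∃ (M : Type) (_ : Nonempty M) (S : L.Structure M),
        ModelsT M S T0 ∧ ModelsK M S K0 ∧ ModelsK M S K ∧ ModelsG M S G) ↔
     (¬ ∃ (M : Type) (_ : Nonempty M) (S : L.Structure M),
        ModelsT M S T0 ∧ ModelsK M S K0 ∧
          ModelsG M S (instancesIn F K (estKG F K G) ∪ G)))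

/-- Locality of the theory extension `T0 ⊆ T0 ∪ K` with extension symbols `F`. -/
abbrev LocalExt (F : Set (Sym L)) (T0 : L.Theory) (K : Set (Clause L)) : Prop :=
  LocalExt2 F T0 ∅ K

/-- `Ψ`-locality of the theory extension `T0 ⊆ T0 ∪ K` with extension symbols `F`. -/
def PsiLocalExt (F : Set (Sym L)) (T0 : L.Theory) (K : Set (Clause L))
    (Ψ : Set (GTerm L) → Set (GTerm L)) : Prop :=
  ∀ G : Set (GClause L), G.Finite →
    (¬ SatTKG T0 K G ↔ ¬ SatTKG T0 ∅ (instancesIn F K (Ψ (estKG F K G)) ∪ G))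

/- ### Flatness and linearity -/

/-- All symbols occurring directly below a function symbol from `F` are variables. -/
def flatTerm (F : Set (Sym L)) {α : Type} : L.Term α → Prop
  | .var _ => True
  | .func f ts =>
      ((⟨_, f⟩ : Sym L) ∈ F → ∀ i, ∃ a, ts i = Term.var a) ∧ ∀ i, flatTerm F (ts i)

/-- All symbols occurring directly below a function symbol from `F` are constants. -/
def flatGTerm (F : Set (Sym L)) : GTerm L → Prop
  | .var e => e.elim
  | .func f ts =>
      ((⟨_, f⟩ : Sym L) ∈ F → ∀ i, ∃ c : L.Functions 0, ts i = constT c) ∧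
        ∀ i, flatGTerm F (ts i)

def Clause.extTerms (F : Set (Sym L)) (C : Clause L) : Set (L.Term (Fin C.nvars)) :=
  { t | rootIn F t ∧ ∃ l ∈ C.lits, ∃ s ∈ Lit.terms l, t ∈ subterms s }

def Clause.Flat (F : Set (Sym L)) (C : Clause L) : Prop :=
  ∀ l ∈ C.lits, ∀ t ∈ Lit.terms l, flatTerm F t

def Clause.Linear (F : Set (Sym L)) (C : Clause L) : Prop :=
  (∀ t ∈ C.extTerms F, ∀ u ∈ C.extTerms F,
      (∃ x, x ∈ varOccs t ∧ x ∈ varOccs u) → t = u) ∧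
  (∀ t ∈ C.extTerms F, (varOccs t).Nodup)

/-- Every variable occurring in the clause occurs below a function symbol from `F`. -/
def Clause.VarsBelowExt (F : Set (Sym L)) (C : Clause L) : Prop :=
  ∀ x : Fin C.nvars, (∃ l ∈ C.lits, ∃ s ∈ Lit.terms l, x ∈ varOccs s) →
    ∃ t ∈ C.extTerms F, x ∈ varOccs t

def GClause.extTerms (F : Set (Sym L)) (C : GClause L) : Set (GTerm L) :=
  { t | rootIn F t ∧ t ∈ GClause.gterms C }

def GClause.Flat (F : Set (Sym L)) (C : GClause L) : Prop :=
  ∀ l ∈ C, ∀ t ∈ Lit.terms l, flatGTerm F t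

def GClause.Linear (F : Set (Sym L)) (C : GClause L) : Prop :=
  (∀ t ∈ GClause.extTerms F C, ∀ u ∈ GClause.extTerms F C,
      (∃ c, c ∈ constOccs t ∧ c ∈ constOccs u) → t = u) ∧
  (∀ t ∈ GClause.extTerms F C, (constOccs t).Nodup)

/- ### Agreement of structures and (reduct-)embeddings -/

/-- The two interpretations agree on all relation symbols and on the function symbols in `F`. -/
def AgreeOn (M : Type) (S1 S2 : L.Structure M) (F : Set (Sym L)) : Prop :=
  (∀ (n : ℕ) (f : L.Functions n), (⟨n, f⟩ : Sym L) ∈ F →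
      ∀ x : Fin n → M, FunM M S1 f x = FunM M S2 f x) ∧
  (∀ (n : ℕ) (r : L.Relations n) (x : Fin n → M), RelM M S1 r x ↔ RelM M S2 r x)

/-- An embedding of the reducts to the subsignature consisting of all predicate symbols and
the function symbols in `F`: an injective map preserving and reflecting all predicates and
preserving the functions in `F`. -/
structure SubEmb (L : FirstOrder.Language.{0, 0}) (F : Set (Sym L)) (M N : Type)
    (SM : L.Structure M) (SN : L.Structure N) : Type where
  toFun : M → N
  inj : Function.Injective toFun
  map_fun : ∀ (n : ℕ) (f : L.Functions n), (⟨n, f⟩ : Sym L) ∈ F →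
      ∀ x : Fin n → M, toFun (FunM M SM f x) = FunM N SN f (toFun ∘ x)
  map_rel : ∀ (n : ℕ) (r : L.Relations n) (x : Fin n → M),
      RelM M SM r x ↔ RelM N SN r (toFun ∘ x)

/- ### Quantifier elimination and related properties of the base theory -/

/-- `T0` allows quantifier elimination (for formulas over the symbols in `F0`). -/
def HasQE (T0 : L.Theory) (F0 : Set (Sym L)) : Prop :=
  ∀ (m : ℕ) (φ : L.Formula (Fin m)), bfSyms φ ⊆ F0 →
    ∃ ψ : L.Formula (Fin m), ψ.IsQF ∧ bfSyms ψ ⊆ F0 ∧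
      ∀ (M : Type) (S : L.Structure M), Nonempty M → ModelsT M S T0 →
        ∀ v : Fin m → M, (RealizeF M S φ v ↔ RealizeF M S ψ v)

def ModelsLits (M : Type) (S : L.Structure M) (A : List (Lit L Empty)) : Prop :=
  ∀ l ∈ A, Lit.Realize M S (fun e : Empty => e.elim) l

def litListSyms (A : List (Lit L Empty)) : Set (Sym L) := ⋃ l ∈ A, Lit.syms l

/-- Convexity of a theory (with clause axioms `K`). -/
def Convex (T0 : L.Theory) (K : Set (Clause L)) : Prop :=
  ∀ Γ : List (Lit L Empty), (∀ l ∈ Γ, l.Positive) →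
  ∀ (m : ℕ) (s t : Fin (m + 1) → GTerm L),
    (∀ (M : Type) (S : L.Structure M), Nonempty M → ModelsT M S T0 → ModelsK M S K →
        ModelsLits M S Γ → ∃ i, GVal M S (s i) = GVal M S (t i)) →
    ∃ i0, ∀ (M : Type) (S : L.Structure M), Nonempty M → ModelsT M S T0 → ModelsK M S K →
        ModelsLits M S Γ → GVal M S (s i0) = GVal M S (t i0)

/-- Stable infiniteness. -/
def StablyInfinite (T0 : L.Theory) (K : Set (Clause L)) : Prop :=
  ∀ φ : L.Sentence, φ.IsQF →
    (∃ (M : Type) (_ : Nonempty M) (S : L.Structure M),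
        ModelsT M S T0 ∧ ModelsK M S K ∧ RealizeSent M S φ) →
    ∃ (M : Type) (_ : Infinite M) (S : L.Structure M),
        ModelsT M S T0 ∧ ModelsK M S K ∧ RealizeSent M S φ

/-- Equality interpolation (for a convex theory with interpreted symbols `F0`). -/
def EqInterpolating (T0 : L.Theory) (F0 : Set (Sym L)) : Prop :=
  ∀ (A B : List (Lit L Empty)) (a b : L.Functions 0),
    (⟨0, a⟩ : Sym L) ∉ litListSyms B → (⟨0, b⟩ : Sym L) ∉ litListSyms A →
    (∀ (M : Type) (S : L.Structure M), Nonempty M → ModelsT M S T0 → ModelsLits M S A →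
        ModelsLits M S B → GVal M S (constT a) = GVal M S (constT b)) →
    ∃ t : GTerm L, termSyms t ⊆ F0 ∪ (litListSyms A ∩ litListSyms B) ∧
      ∀ (M : Type) (S : L.Structure M), Nonempty M → ModelsT M S T0 → ModelsLits M S A →
        ModelsLits M S B →
          GVal M S (constT a) = GVal M S t ∧ GVal M S t = GVal M S (constT b)

/-- A universal sentence. -/
def IsUniversalSent (s : L.Sentence) : Prop :=
  ∃ (m : ℕ) (ψ : L.BoundedFormula Empty m), ψ.IsQF ∧ s = ψ.alls

def IsUniversalTheory (T : L.Theory) : Prop := ∀ s ∈ T, IsUniversalSent s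

/-- Close the outermost `k` bound variables existentially. -/
def exsTo {m : ℕ} : ∀ {k : ℕ}, L.BoundedFormula Empty (m + k) → L.BoundedFormula Empty m
  | 0, φ => φ
  | _ + 1, φ => exsTo φ.ex

/-- A `∀∃`-sentence. -/
def IsAESent (s : L.Sentence) : Prop :=
  ∃ (m k : ℕ) (ψ : L.BoundedFormula Empty (m + k)), ψ.IsQF ∧ s = (exsTo ψ).alls

def IsAETheory (T : L.Theory) : Prop := ∀ s ∈ T, IsAESent s

/- ### General uniform interpolants and uniform interpolants (covers) -/

/-- `ψ` is a general uniform interpolant of the ground clause set `G` w.r.t. the theory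
`T0 ∪ K` and the symbols in `Keep` (which contains all interpreted symbols, the shared
uninterpreted symbols and the shared constants). -/
def IsGUIg (T0 : L.Theory) (K : Set (Clause L)) (G : Set (GClause L))
    (Keep : Set (Sym L)) (ψ : L.Sentence) : Prop :=
  ψ.IsQF ∧ sentSyms ψ ⊆ Keep ∧ EntailsC T0 K G ψ ∧
  ∀ θ : L.Sentence, θ.IsQF → sentSyms θ ∩ GSyms G ⊆ Keep →
    EntailsC T0 K G θ → EntailsS T0 K ψ θ

/-- `ψ` is a general uniform interpolant of the ground formula `φ` w.r.t. the theory
`T0 ∪ K` and the symbols in `Keep`. -/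
def IsGUIs (T0 : L.Theory) (K : Set (Clause L)) (φ : L.Sentence)
    (Keep : Set (Sym L)) (ψ : L.Sentence) : Prop :=
  ψ.IsQF ∧ sentSyms ψ ⊆ Keep ∧ EntailsS T0 K φ ψ ∧
  ∀ θ : L.Sentence, θ.IsQF → sentSyms θ ∩ sentSyms φ ⊆ Keep →
    EntailsS T0 K φ θ → EntailsS T0 K ψ θ

/-- `ψ` is a uniform interpolant (cover) of `Γ` w.r.t. the theory `T0 ∪ K`, the set `CC`
of (eliminable) constants and the kept constants `Cs ⊆ CC`; all other symbols are treated
as interpreted. -/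
def IsUI (T0 : L.Theory) (K : Set (Clause L)) (CC Cs : Set (Sym L)) (Γ ψ : L.Sentence) : Prop :=
  ψ.IsQF ∧ sentSyms ψ ∩ CC ⊆ Cs ∧ EntailsS T0 K Γ ψ ∧
  ∀ θ : L.Sentence, θ.IsQF → sentSyms θ ∩ sentSyms Γ ∩ CC ⊆ Cs →
    EntailsS T0 K Γ θ → EntailsS T0 K ψ θ

/- ### The semantic specification of Algorithm 1 -/

/-- The constants occurring in some term of `S` as an argument of a function symbol in `Sigs`. -/
def argConstsOf (Sigs : Set (Sym L)) (S : Set (GTerm L)) : Set (Sym L) :=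
  { p | ∃ c : L.Functions 0, p = ⟨0, c⟩ ∧
      ∃ t ∈ S, ∃ (n : ℕ) (f : L.Functions n) (ts : Fin n → GTerm L),
        t = Term.func f ts ∧ (⟨n, f⟩ : Sym L) ∈ Sigs ∧ ∃ i, ts i = constT c }

/-- Semantic specification of the output `Γ` of Algorithm 1, applied to the theory extension
`T0 ∪ K` (extension symbols `F`), the ground clauses `G` and the instantiation terms `Tt`,
keeping exactly the symbols in `Keep` (all interpreted symbols, the parameters `Sigs` and the
non-eliminated constants):  `Γ` is a ground formula over `Keep` which, on each model of `T0`,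
expresses the existence of values for the eliminated constants and for the purified names of
the extension terms (equivalently, of a reinterpretation of the eliminated symbols) satisfying
`K[Tt] ∪ G`. -/
def AlgOneOutput (F : Set (Sym L)) (T0 : L.Theory) (K : Set (Clause L)) (G : Set (GClause L))
    (Tt : Set (GTerm L)) (Keep : Set (Sym L)) (Γ : L.Sentence) : Prop :=
  Γ.IsQF ∧ sentSyms Γ ⊆ Keep ∧
  ∀ (M : Type) (S : L.Structure M), Nonempty M → ModelsT M S T0 →
    (RealizeSent M S Γ ↔
      ∃ S' : L.Structure M, AgreeOn M S S' Keep ∧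
        ModelsG M S' (instancesIn F K Tt) ∧ ModelsG M S' G)

/- ### Implicit definability -/

/-- `f` is implicitly definable w.r.t. `T0 ∪ K` over the symbols in `Pi1`:
any two interpretations (on the same universe) which agree on `Pi1` and are both models
of `T0 ∪ K` interpret `f` in the same way.  (This is the standard semantic rendering of
the definition via renaming the symbols outside `Pi1` to primed copies.) -/
def ImplicitlyDefinable (T0 : L.Theory) (K : Set (Clause L)) (Pi1 : Set (Sym L))
    {n : ℕ} (f : L.Functions n) : Prop :=
  ∀ (M : Type), Nonempty M → ∀ S1 S2 : L.Structure M,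
    AgreeOn M S1 S2 Pi1 →
    ModelsT M S1 T0 → ModelsK M S1 K → ModelsT M S2 T0 → ModelsK M S2 K →
    ∀ x : Fin n → M, FunM M S1 f x = FunM M S2 f x

end PaperSE

namespace PaperSE

/-! **STATEMENT 5** (Example `counterexample`). -/

/-- The function symbols: the base constants `0`, `1` of `LI([0,1])`, the fresh constants
`a`, `b` and the unary extension function `f`. -/
inductive F01 : ℕ → Type where
  | zero : F01 0
  | one : F01 0
  | ca : F01 0
  | cb : F01 0
  | ff : F01 1

/-- The single relation symbol `≤`. -/
inductive R01 : ℕ → Type where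
  | le : R01 2

/-- The signature of `LI([0,1])` extended with `f` and the constants `a`, `b`. -/
def L01 : FirstOrder.Language.{0, 0} := ⟨F01, R01⟩

/-- The unit interval, the standard model of `LI([0,1])`. -/
abbrev UnitI : Type := Set.Icc (0 : ℝ) 1

/-- The standard interpretation on `[0,1]` (with dummy values for `f`, `a`, `b`). -/
noncomputable def stdS : L01.Structure UnitI where
  funMap {n} f x :=
    match f with
    | F01.zero => ⟨0, by constructor <;> norm_num⟩
    | F01.one => ⟨1, by constructor <;> norm_num⟩
    | F01.ca => ⟨0, by constructor <;> norm_num⟩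
    | F01.cb => ⟨0, by constructor <;> norm_num⟩
    | F01.ff => x 0
  RelMap {n} r x :=
    match r with
    | R01.le => (x 0 : Set.Icc (0:ℝ) 1) ≤ x 1

/-- The base symbols of `LI([0,1])`: the constants `0` and `1` (and the relation `≤`). -/
def baseSyms : Set (Sym L01) := {⟨0, F01.zero⟩, ⟨0, F01.one⟩}

/-- `LI([0,1])`: the theory of the unit interval (all sentences in the base signature true
in `[0,1]`). -/
def T01 : L01.Theory :=
  { s | sentSyms s ⊆ baseSyms ∧ RealizeSent UnitI stdS s }

/-- `Mon_f : ∀ x y (x ≤ y → f(x) ≤ f(y))`. -/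
def monClause : Clause L01 :=
  ⟨2, [Lit.nrel R01.le ![Term.var 0, Term.var 1],
       Lit.rel R01.le ![Term.func F01.ff ![Term.var 0], Term.func F01.ff ![Term.var 1] ] ]⟩

/-- `∀ x (f(x) ≤ 1)`. -/
def boundClause : Clause L01 :=
  ⟨1, [Lit.rel R01.le ![Term.func F01.ff ![Term.var 0], Term.func F01.one ![] ] ]⟩

def K01 : Set (Clause L01) := {monClause, boundClause}

/-- `G = (a ≤ b) ∧ (b ≤ f(b))`. -/
def G01 : Set (GClause L01) :=
  { [Lit.rel R01.le ![constT F01.ca, constT F01.cb] ],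
    [Lit.rel R01.le ![constT F01.cb, Term.func F01.ff ![constT F01.cb] ] ] }

/-- The ground term `fⁿ(1)`. -/
def fpow : ℕ → GTerm L01
  | 0 => constT F01.one
  | n + 1 => Term.func F01.ff ![fpow n]

/-- The atomic sentence `t ≤ u` for ground terms `t`, `u`. -/
def leSent (t u : GTerm L01) : L01.Sentence :=
  FirstOrder.Language.BoundedFormula.rel R01.le
    ![Term.relabel Sum.inl t, Term.relabel Sum.inl u]

/-! ### Auxiliary material -/

section Aux5

open Set

lemma TVal_def {M : Type} (S : L01.Structure M) {α : Type} (v : α → M) (t : L01.Term α) :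
    TVal M S v t = @Term.realize L01 M S α v t := rfl

lemma RelM_def {M : Type} (S : L01.Structure M) {n : ℕ} (r : L01.Relations n) (x : Fin n → M) :
    RelM M S r x = @Structure.RelMap L01 M S n r x := rfl

lemma FunM_def {M : Type} (S : L01.Structure M) {n : ℕ} (f : L01.Functions n) (x : Fin n → M) :
    FunM M S f x = @Structure.funMap L01 M S n f x := rfl

lemma RealizeF_def {M : Type} (S : L01.Structure M) {α : Type} (φ : L01.Formula α) (v : α → M) :
    RealizeF M S φ v = @Formula.Realize L01 M S α φ v := rfl

lemma RealizeSent_def {M : Type} (S : L01.Structure M) (φ : L01.Sentence) :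
    RealizeSent M S φ = @Formula.Realize L01 M S Empty φ (fun e => e.elim) := rfl

lemma GVal_def {M : Type} (S : L01.Structure M) (t : GTerm L01) :
    GVal M S t = @Term.realize L01 M S Empty (fun e => e.elim) t := rfl

/-- A generic structure on the unit interval. -/
noncomputable def S3 (va vb : UnitI) (g : UnitI → UnitI) : L01.Structure UnitI where
  funMap {n} f x :=
    match f with
    | F01.zero => ⟨0, by norm_num⟩
    | F01.one => ⟨1, by norm_num⟩
    | F01.ca => va
    | F01.cb => vb
    | F01.ff => g (x 0)
  RelMap {n} r x :=
    match r with
    | R01.le => (x 0 : UnitI) ≤ x 1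

end Aux5
section Aux5

lemma notin_base_ca : (⟨0, F01.ca⟩ : Sym L01) ∉ baseSyms := by
  intro h
  simp only [baseSyms, Set.mem_insert_iff, Set.mem_singleton_iff] at h
  rcases h with h | h <;> · rw [Sigma.ext_iff] at h; exact F01.noConfusion rfl h.2

lemma notin_base_cb : (⟨0, F01.cb⟩ : Sym L01) ∉ baseSyms := by
  intro h
  simp only [baseSyms, Set.mem_insert_iff, Set.mem_singleton_iff] at h
  rcases h with h | h <;> · rw [Sigma.ext_iff] at h; exact F01.noConfusion rfl h.2

lemma notin_base_ff : (⟨1, F01.ff⟩ : Sym L01) ∉ baseSyms := by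
  intro h
  simp only [baseSyms, Set.mem_insert_iff, Set.mem_singleton_iff] at h
  rcases h with h | h <;> · rw [Sigma.ext_iff] at h; exact absurd h.1 (by norm_num)

lemma tval_base (S' : L01.Structure UnitI)
    (h0 : @Structure.funMap L01 UnitI S' 0 F01.zero = @Structure.funMap L01 UnitI stdS 0 F01.zero)
    (h1 : @Structure.funMap L01 UnitI S' 0 F01.one = @Structure.funMap L01 UnitI stdS 0 F01.one) :
    ∀ {α : Type} (t : L01.Term α), termSyms t ⊆ baseSyms →
      ∀ v : α → UnitI, @Term.realize L01 UnitI S' α v t = @Term.realize L01 UnitI stdS α v t := by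
  intro α t
  induction t with
  | var a => intro _ _; rfl
  | func f ts ih =>
      intro hsub v
      have hmem : (⟨_, f⟩ : Sym L01) ∈ baseSyms := hsub (by left; rfl)
      have hargs : ∀ i, termSyms (ts i) ⊆ baseSyms := by
        intro i
        exact fun s hs => hsub (by right; exact Set.mem_iUnion.2 ⟨i, hs⟩)
      cases f with
      | zero =>
          simp only [Term.realize]
          rw [h0]
          congr 1
          funext i; exact i.elim0
      | one =>
          simp only [Term.realize]
          rw [h1]
          congr 1
          funext i; exact i.elim0
      | ca => exact absurd hmem notin_base_ca
      | cb => exact absurd hmem notin_base_cb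
      | ff => exact absurd hmem notin_base_ff

lemma realize_base (S' : L01.Structure UnitI)
    (h0 : @Structure.funMap L01 UnitI S' 0 F01.zero = @Structure.funMap L01 UnitI stdS 0 F01.zero)
    (h1 : @Structure.funMap L01 UnitI S' 0 F01.one = @Structure.funMap L01 UnitI stdS 0 F01.one)
    (hR : ∀ x : Fin 2 → UnitI, @Structure.RelMap L01 UnitI S' 2 R01.le x ↔
        @Structure.RelMap L01 UnitI stdS 2 R01.le x) :
    ∀ {n : ℕ} (φ : L01.BoundedFormula Empty n), bfSyms φ ⊆ baseSyms →
      ∀ (v : Empty → UnitI) (xs : Fin n → UnitI),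
        (@BoundedFormula.Realize L01 UnitI S' Empty n φ v xs ↔
         @BoundedFormula.Realize L01 UnitI stdS Empty n φ v xs) := by
  intro n φ
  induction φ with
  | falsum => intro _ _ _; rfl
  | equal t u =>
      intro hsub v xs
      have ht : termSyms t ⊆ baseSyms := fun s hs => hsub (Or.inl hs)
      have hu : termSyms u ⊆ baseSyms := fun s hs => hsub (Or.inr hs)
      simp only [BoundedFormula.Realize]
      rw [tval_base S' h0 h1 t ht, tval_base S' h0 h1 u hu]
  | rel R ts =>
      intro hsub v xs
      have hts : ∀ i, termSyms (ts i) ⊆ baseSyms := by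
        intro i s hs
        exact hsub (Set.mem_iUnion.2 ⟨i, hs⟩)
      cases R with
      | le =>
          simp only [BoundedFormula.Realize]
          rw [show (fun i => Term.realize (Sum.elim v xs) (ts i)) =
              (fun i => @Term.realize L01 UnitI stdS _ (Sum.elim v xs) (ts i)) from
            funext fun i => tval_base S' h0 h1 (ts i) (hts i) _]
          exact hR _
  | imp f g ihf ihg =>
      intro hsub v xs
      simp only [BoundedFormula.Realize]
      rw [ihf (fun s hs => hsub (Or.inl hs)) v xs, ihg (fun s hs => hsub (Or.inr hs)) v xs]
  | all f ihf =>
      intro hsub v xs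
      simp only [BoundedFormula.Realize]
      exact forall_congr' fun x => ihf hsub v _

lemma modelsT_S3 (va vb : UnitI) (g : UnitI → UnitI) : ModelsT UnitI (S3 va vb g) T01 := by
  intro φ hφ
  obtain ⟨hsub, htrue⟩ := hφ
  rw [RealizeSent_def] at htrue ⊢
  unfold Formula.Realize at htrue ⊢
  exact (realize_base (S3 va vb g) rfl rfl (fun x => Iff.rfl) φ hsub _ _).2 htrue

end Aux5
section Aux5

lemma S3_rel (va vb : UnitI) (g : UnitI → UnitI) (x : Fin 2 → UnitI) :
    @Structure.RelMap L01 UnitI (S3 va vb g) 2 R01.le x ↔ x 0 ≤ x 1 := Iff.rfl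

lemma S3_ff (va vb : UnitI) (g : UnitI → UnitI) (x : Fin 1 → UnitI) :
    @Structure.funMap L01 UnitI (S3 va vb g) 1 F01.ff x = g (x 0) := rfl

lemma S3_ca (va vb : UnitI) (g : UnitI → UnitI) (x : Fin 0 → UnitI) :
    @Structure.funMap L01 UnitI (S3 va vb g) 0 F01.ca x = va := rfl

lemma S3_cb (va vb : UnitI) (g : UnitI → UnitI) (x : Fin 0 → UnitI) :
    @Structure.funMap L01 UnitI (S3 va vb g) 0 F01.cb x = vb := rfl

lemma S3_zero (va vb : UnitI) (g : UnitI → UnitI) (x : Fin 0 → UnitI) :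
    @Structure.funMap L01 UnitI (S3 va vb g) 0 F01.zero x = ⟨0, by norm_num⟩ := rfl

lemma S3_one (va vb : UnitI) (g : UnitI → UnitI) (x : Fin 0 → UnitI) :
    @Structure.funMap L01 UnitI (S3 va vb g) 0 F01.one x = ⟨1, by norm_num⟩ := rfl

lemma modelsK_S3 (va vb : UnitI) (g : UnitI → UnitI) (hm : Monotone g)
    (h1 : ∀ x : UnitI, (g x : ℝ) ≤ 1) : ModelsK UnitI (S3 va vb g) K01 := by
  intro C hC
  rcases hC with rfl | rfl
  · show ∀ v : Fin 2 → UnitI,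
        ∃ l ∈ [Lit.nrel R01.le ![Term.var 0, Term.var 1],
          Lit.rel R01.le ![Term.func F01.ff ![Term.var 0], Term.func F01.ff ![Term.var 1] ] ],
          Lit.Realize UnitI (S3 va vb g) v l
    intro v
    by_cases h : v 0 ≤ v 1
    · refine ⟨Lit.rel R01.le ![Term.func F01.ff ![Term.var 0], Term.func F01.ff ![Term.var 1] ],
        by simp, ?_⟩
      simp only [Lit.Realize, TVal_def, RelM_def, Matrix.cons_val_zero, Matrix.cons_val_one,
        Matrix.head_cons, Term.realize_func, Term.realize_var, S3_rel, S3_ff]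
      exact hm h
    · refine ⟨Lit.nrel R01.le ![Term.var 0, Term.var 1], by simp, ?_⟩
      simp only [Lit.Realize, TVal_def, RelM_def, Matrix.cons_val_zero, Matrix.cons_val_one,
        Matrix.head_cons, Term.realize_var, S3_rel]
      exact h
  · show ∀ v : Fin 1 → UnitI,
        ∃ l ∈ [Lit.rel R01.le ![Term.func F01.ff ![Term.var 0], Term.func F01.one ![] ] ],
          Lit.Realize UnitI (S3 va vb g) v l
    intro v
    refine ⟨Lit.rel R01.le ![Term.func F01.ff ![Term.var 0], Term.func F01.one ![] ],
      by simp, ?_⟩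
    simp only [Lit.Realize, TVal_def, RelM_def, Matrix.cons_val_zero, Matrix.cons_val_one,
      Matrix.head_cons, Term.realize_func, Term.realize_var, S3_rel, S3_ff, S3_one]
    exact h1 _

end Aux5
section Aux5

/-- First counterexample dynamics: halving below `1/2`, averaging with `1/2` above. -/
noncomputable def f1 (x : UnitI) : UnitI :=
  if (x : ℝ) < 1/2 then
    ⟨(x : ℝ)/2, by constructor
                   · nlinarith [x.2.1]
                   · nlinarith [x.2.2]⟩
  else
    ⟨((x : ℝ) + 1/2)/2, by constructor
                           · nlinarith [x.2.1]
                           · nlinarith [x.2.2]⟩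

/-- Second counterexample dynamics: halving. -/
noncomputable def f2 (x : UnitI) : UnitI :=
  ⟨(x : ℝ)/2, by constructor
                 · nlinarith [x.2.1]
                 · nlinarith [x.2.2]⟩

lemma f1_mono : Monotone f1 := by
  intro x y hxy
  have h : (x:ℝ) ≤ (y:ℝ) := hxy
  unfold f1
  split_ifs with hx hy hy
  · exact Subtype.mk_le_mk.2 (by linarith)
  · exact Subtype.mk_le_mk.2 (by linarith)
  · exact absurd (lt_of_le_of_lt h hy) hx
  · exact Subtype.mk_le_mk.2 (by linarith)

lemma f1_le_one (x : UnitI) : (f1 x : ℝ) ≤ 1 := by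
  unfold f1; split_ifs with hx
  · simp only; nlinarith [x.2.2]
  · simp only; nlinarith [x.2.2]

lemma f2_mono : Monotone f2 := by
  intro x y hxy
  have h : (x:ℝ) ≤ (y:ℝ) := hxy
  exact Subtype.mk_le_mk.2 (by linarith)

lemma f2_le_one (x : UnitI) : (f2 x : ℝ) ≤ 1 := by
  simp only [f2]; nlinarith [x.2.2]

noncomputable def a1 : UnitI := ⟨1/4, by norm_num⟩
noncomputable def b1 : UnitI := ⟨1/2, by norm_num⟩

lemma two_pow_ge (k : ℕ) : (4:ℝ) ≤ 2^(k+2) := by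
  calc (4:ℝ) = 2^2 := by norm_num
  _ ≤ 2^(k+2) := pow_le_pow_right₀ (by norm_num) (by omega)

noncomputable def a2 (k : ℕ) : UnitI := ⟨3/2^(k+2), by
  constructor
  · positivity
  · rw [div_le_one (by positivity)]
    nlinarith [two_pow_ge k]⟩

/-- The first model: `a = 1/4`, `b = 1/2`, `f = f1`. -/
noncomputable def S1 : L01.Structure UnitI := S3 a1 b1 f1

/-- The second model: `a = 3/2^(k+2)`, `f = f2`. -/
noncomputable def S2 (k : ℕ) : L01.Structure UnitI := S3 (a2 k) ⟨0, by norm_num⟩ f2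

lemma f1_fix : f1 b1 = b1 := by
  unfold f1 b1
  rw [if_neg (by norm_num)]
  norm_num

lemma modelsG_S1 : ModelsG UnitI S1 G01 := by
  intro C hC
  rcases hC with rfl | rfl
  · refine ⟨Lit.rel R01.le ![constT F01.ca, constT F01.cb], by simp, ?_⟩
    simp only [Lit.Realize, TVal_def, RelM_def, Matrix.cons_val_zero, Matrix.cons_val_one,
      Matrix.head_cons, constT, Term.realize_func, S1, S3_rel, S3_ca, S3_cb]
    exact Subtype.mk_le_mk.2 (by norm_num)
  · refine ⟨Lit.rel R01.le ![constT F01.cb, Term.func F01.ff ![constT F01.cb] ], by simp, ?_⟩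
    simp only [Lit.Realize, TVal_def, RelM_def, Matrix.cons_val_zero, Matrix.cons_val_one,
      Matrix.head_cons, constT, Term.realize_func, S1, S3_rel, S3_cb, S3_ff]
    show (b1 : UnitI) ≤ f1 b1
    rw [f1_fix]

/-- Value of `fⁿ(1)` in the first model. -/
lemma gval_fpow_S1 : ∀ j : ℕ, (GVal UnitI S1 (fpow j) : ℝ) = 1/2 + (1/2)^(j+1) := by
  intro j
  induction j with
  | zero =>
      rw [GVal_def]
      show ((@Structure.funMap L01 UnitI S1 0 F01.one _ : UnitI) : ℝ) = _
      rw [show @Structure.funMap L01 UnitI S1 0 F01.one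
        (fun i => @Term.realize L01 UnitI S1 Empty (fun e => e.elim) ((fun j => j.elim0) i))
        = ⟨1, by norm_num⟩ from S3_one _ _ _ _]
      norm_num
  | succ j ih =>
      rw [GVal_def] at ih ⊢
      show ((@Structure.funMap L01 UnitI S1 1 F01.ff _ : UnitI) : ℝ) = _
      rw [show @Structure.funMap L01 UnitI S1 1 F01.ff
          (fun i => @Term.realize L01 UnitI S1 Empty (fun e => e.elim) (![fpow j] i)) =
          f1 (@Term.realize L01 UnitI S1 Empty (fun e => e.elim) (fpow j)) from rfl]
      unfold f1
      rw [if_neg (not_lt.2 (by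
        rw [show ((@Term.realize L01 UnitI S1 Empty (fun e => e.elim) (fpow j)
            : UnitI) : ℝ) = 1/2 + (1/2)^(j+1) from ih]
        nlinarith [pow_pos (show (0:ℝ) < 1/2 by norm_num) (j+1)]))]
      simp only
      rw [show ((@Term.realize L01 UnitI S1 Empty (fun e => e.elim) (fpow j) : UnitI) : ℝ)
            = 1/2 + (1/2)^(j+1) from ih]
      ring

/-- Value of `fⁿ(1)` in the second model. -/
lemma gval_fpow_S2 (k : ℕ) : ∀ j : ℕ, (GVal UnitI (S2 k) (fpow j) : ℝ) = (1/2)^j := by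
  intro j
  induction j with
  | zero =>
      rw [GVal_def]
      show ((@Structure.funMap L01 UnitI (S2 k) 0 F01.one _ : UnitI) : ℝ) = _
      rw [show @Structure.funMap L01 UnitI (S2 k) 0 F01.one
        (fun i => @Term.realize L01 UnitI (S2 k) Empty (fun e => e.elim) ((fun j => j.elim0) i))
        = ⟨1, by norm_num⟩ from S3_one _ _ _ _]
      norm_num
  | succ j ih =>
      rw [GVal_def] at ih ⊢
      show ((@Structure.funMap L01 UnitI (S2 k) 1 F01.ff _ : UnitI) : ℝ) = _
      rw [show @Structure.funMap L01 UnitI (S2 k) 1 F01.ff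
          (fun i => @Term.realize L01 UnitI (S2 k) Empty (fun e => e.elim) (![fpow j] i)) =
          f2 (@Term.realize L01 UnitI (S2 k) Empty (fun e => e.elim) (fpow j)) from rfl]
      simp only [f2]
      rw [show ((@Term.realize L01 UnitI (S2 k) Empty (fun e => e.elim) (fpow j) : UnitI) : ℝ)
            = (1/2)^j from ih]
      ring

end Aux5
section Aux5

/-- `∀ x, x ≤ 1`. -/
def leOneSent : L01.Sentence :=
  BoundedFormula.all (BoundedFormula.rel R01.le
    ![Term.var (Sum.inr 0), Term.func F01.one (fun i => i.elim0)])

/-- Transitivity of `≤`. -/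
def transSent : L01.Sentence :=
  (((BoundedFormula.rel R01.le ![Term.var (Sum.inr 0), Term.var (Sum.inr 1)]).imp
    (((BoundedFormula.rel R01.le ![Term.var (Sum.inr 1), Term.var (Sum.inr 2)]).imp
      (BoundedFormula.rel R01.le
        ![Term.var (Sum.inr 0), Term.var (Sum.inr (2 : Fin 3))])))).all.all).all

lemma termSyms_var {α : Type} (a : α) : termSyms (L := L01) (Term.var a) = ∅ := rfl

lemma leOneSent_syms : sentSyms leOneSent ⊆ baseSyms := by
  intro s hs
  simp only [leOneSent, sentSyms, bfSyms, Set.mem_iUnion] at hs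
  obtain ⟨i, hi⟩ := hs
  fin_cases i
  · simp only [Fin.zero_eta, Fin.mk_one, Matrix.cons_val_zero, termSyms_var] at hi
    exact absurd hi (Set.notMem_empty _)
  · simp only [Fin.zero_eta, Fin.mk_one, Matrix.cons_val_one, Matrix.head_cons, termSyms] at hi
    rcases hi with rfl | hi
    · exact Or.inr rfl
    · simp only [Set.mem_iUnion] at hi
      obtain ⟨i, _⟩ := hi
      exact i.elim0

lemma mem_termSyms_pair {α : Type} (s : Sym L01) (t u : L01.Term α) (i : Fin 2)
    (h : s ∈ termSyms (![t, u] i)) : s ∈ termSyms t ∨ s ∈ termSyms u := by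
  revert h
  fin_cases i
  · simp only [Fin.zero_eta, Matrix.cons_val_zero]; exact Or.inl
  · simp only [Fin.mk_one, Matrix.cons_val_one, Matrix.head_cons]; exact Or.inr

lemma transSent_syms : sentSyms transSent ⊆ baseSyms := by
  intro s hs
  exfalso
  simp only [transSent, sentSyms, bfSyms, Set.mem_union, Set.mem_iUnion] at hs
  rcases hs with ⟨i, hi⟩ | ⟨i, hi⟩ | ⟨i, hi⟩ <;>
    rcases mem_termSyms_pair s _ _ i hi with h | h <;>
    rw [termSyms_var] at h <;> exact Set.notMem_empty _ h

lemma realize_leOne {M : Type} (S : L01.Structure M) :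
    RealizeSent M S leOneSent ↔
      ∀ x : M, @Structure.RelMap L01 M S 2 R01.le
        ![x, @Structure.funMap L01 M S 0 F01.one (fun i => i.elim0)] := by
  rw [RealizeSent_def]
  unfold Formula.Realize leOneSent
  rw [BoundedFormula.realize_all]
  refine forall_congr' fun x => ?_
  simp only [BoundedFormula.Realize]
  have : (fun i => Term.realize (L := L01) (M := M)
      (Sum.elim (fun e : Empty => e.elim) (Fin.snoc (default : Fin 0 → M) x))
      (![Term.var (Sum.inr 0), Term.func F01.one (fun i => i.elim0)] i)) =
      ![x, @Structure.funMap L01 M S 0 F01.one (fun i => i.elim0)] := by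
    funext i
    fin_cases i
    · simp [Fin.snoc]
    · simp only [Fin.zero_eta, Fin.mk_one, Matrix.cons_val_one, Matrix.head_cons, Term.realize_func]
      exact congrArg (@Structure.funMap L01 M S 0 F01.one) (funext fun i : Fin 0 => i.elim0)
  rw [this]

lemma realize_trans {M : Type} (S : L01.Structure M) :
    RealizeSent M S transSent ↔
      ∀ x y z : M, @Structure.RelMap L01 M S 2 R01.le ![x, y] →
        @Structure.RelMap L01 M S 2 R01.le ![y, z] →
        @Structure.RelMap L01 M S 2 R01.le ![x, z] := by
  rw [RealizeSent_def]
  unfold Formula.Realize transSent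
  simp only [BoundedFormula.realize_all, BoundedFormula.realize_imp]
  refine forall_congr' fun x => forall_congr' fun y => forall_congr' fun z => ?_
  simp only [BoundedFormula.Realize]
  have e0 : ∀ (ts : Fin 2 → L01.Term (Empty ⊕ Fin 3)) (w : Fin 2 → M),
      (∀ i, Term.realize (L := L01) (M := M)
        (Sum.elim (fun e : Empty => e.elim)
          (Fin.snoc (Fin.snoc (Fin.snoc (default : Fin 0 → M) x) y) z)) (ts i) = w i) →
      (fun i => Term.realize (L := L01) (M := M)
        (Sum.elim (fun e : Empty => e.elim)
          (Fin.snoc (Fin.snoc (Fin.snoc (default : Fin 0 → M) x) y) z)) (ts i)) = w := by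
    intro ts w h; funext i; exact h i
  rw [e0 _ ![x, y] (by intro i; fin_cases i <;> simp [Fin.snoc]),
    e0 _ ![y, z] (by intro i; fin_cases i <;> simp [Fin.snoc]),
    e0 _ ![x, z] (by intro i; fin_cases i <;> simp [Fin.snoc])]

lemma leOne_mem_T01 : leOneSent ∈ T01 := by
  refine ⟨leOneSent_syms, ?_⟩
  rw [realize_leOne]
  intro x
  show x ≤ (⟨1, by norm_num⟩ : UnitI)
  exact Subtype.mk_le_mk.2 x.2.2

lemma trans_mem_T01 : transSent ∈ T01 := by
  refine ⟨transSent_syms, ?_⟩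
  rw [realize_trans]
  intro x y z
  exact le_trans (α := UnitI)

lemma realize_leSent {M : Type} (S : L01.Structure M) (t u : GTerm L01) :
    RealizeSent M S (leSent t u) ↔
      @Structure.RelMap L01 M S 2 R01.le ![GVal M S t, GVal M S u] := by
  rw [RealizeSent_def]
  unfold Formula.Realize leSent
  simp only [BoundedFormula.Realize]
  have : (fun i => Term.realize (L := L01) (M := M)
      (Sum.elim (fun e : Empty => e.elim) (default : Fin 0 → M))
      (![Term.relabel Sum.inl t, Term.relabel Sum.inl u] i)) =
      ![GVal M S t, GVal M S u] := by
    have he : (Sum.elim (fun e : Empty => e.elim) (default : Fin 0 → M) ∘ Sum.inl) =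
        (fun e : Empty => e.elim) := funext fun e => e.elim
    funext i
    fin_cases i
    · simp only [Fin.zero_eta, Fin.mk_one, Matrix.cons_val_zero, Matrix.cons_val_one,
        Matrix.head_cons, Term.realize_relabel, GVal_def]
      rw [he]
    · simp only [Fin.zero_eta, Fin.mk_one, Matrix.cons_val_zero, Matrix.cons_val_one,
        Matrix.head_cons, Term.realize_relabel, GVal_def]
      rw [he]
  rw [this]

/-- Part (i). -/
lemma part_i (n : ℕ) : EntailsC T01 K01 G01 (leSent (constT F01.ca) (fpow n)) := by
  intro M S hne hT hK hG
  set leM : M → M → Prop :=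
    fun x y => @Structure.RelMap L01 M S 2 R01.le ![x, y] with hleM
  set fM : M → M := fun x => @Structure.funMap L01 M S 1 F01.ff ![x] with hfM
  have hzeroarg : ∀ (h g : Fin 0 → M), h = g := fun h g => funext fun i => i.elim0
  set oneM : M := @Structure.funMap L01 M S 0 F01.one (fun i => i.elim0) with honeM
  set aM : M := @Structure.funMap L01 M S 0 F01.ca (fun i => i.elim0) with haM
  set bM : M := @Structure.funMap L01 M S 0 F01.cb (fun i => i.elim0) with hbM
  have h1 : ∀ x : M, leM x oneM := (realize_leOne S).1 (hT _ leOne_mem_T01)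
  have htr : ∀ x y z : M, leM x y → leM y z → leM x z :=
    (realize_trans S).1 (hT _ trans_mem_T01)
  -- monotonicity
  have hmon : ∀ x y : M, leM x y → leM (fM x) (fM y) := by
    intro x y hxy
    obtain ⟨l, hl, hreal⟩ := hK monClause (Set.mem_insert _ _) ![x, y]
    simp only [monClause, List.mem_cons, List.mem_singleton, List.not_mem_nil, or_false] at hl
    replace hl := List.mem_pair.1 hl
    rcases hl with rfl | rfl
    · exfalso
      apply hreal
      have e : (fun i => TVal M S ![x, y]
          ((![Term.var 0, Term.var 1] : Fin 2 → L01.Term (Fin 2)) i)) = ![x, y] := by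
        funext i; fin_cases i <;> simp [TVal_def]
      show @Structure.RelMap L01 M S 2 R01.le _
      refine (congrArg (@Structure.RelMap L01 M S 2 R01.le) e).mpr ?_
      exact hxy
    · have hreal' : @Structure.RelMap L01 M S 2 R01.le
          (fun i => TVal M S ![x, y]
            ((![Term.func F01.ff ![Term.var 0], Term.func F01.ff ![Term.var 1] ] :
              Fin 2 → L01.Term (Fin 2)) i)) := hreal
      have e : (fun i => TVal M S ![x, y]
          ((![Term.func F01.ff ![Term.var 0], Term.func F01.ff ![Term.var 1] ] :
            Fin 2 → L01.Term (Fin 2)) i)) = ![fM x, fM y] := by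
        funext i
        fin_cases i <;>
          simp only [Fin.zero_eta, Fin.mk_one, Matrix.cons_val_zero, Matrix.cons_val_one, Matrix.head_cons, TVal_def,
            Term.realize_func, Term.realize_var, hfM] <;>
          · exact congrArg (@Structure.funMap L01 M S 1 F01.ff) (funext fun i => by fin_cases i <;> simp)
      rw [e] at hreal'
      exact hreal'
  -- GVal computations
  have hg0 : GVal M S (fpow 0) = oneM := by
    rw [GVal_def]
    show @Structure.funMap L01 M S 0 F01.one _ = oneM
    rw [honeM]
    congr 1
    exact hzeroarg _ _
  have hgs : ∀ j, GVal M S (fpow (j + 1)) = fM (GVal M S (fpow j)) := by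
    intro j
    rw [GVal_def, GVal_def]
    show @Structure.funMap L01 M S 1 F01.ff _ = _
    rw [hfM]
    congr 1
    funext i; fin_cases i <;> simp
  -- G facts
  have hab : leM aM bM := by
    obtain ⟨l, hl, hreal⟩ := hG _ (Set.mem_insert _ _)
    simp only [List.mem_cons, List.not_mem_nil, or_false] at hl
    subst hl
    have hreal' : @Structure.RelMap L01 M S 2 R01.le
        (fun i => TVal M S (fun e : Empty => e.elim)
          ((![constT F01.ca, constT F01.cb] : Fin 2 → L01.Term Empty) i)) := hreal
    have e : (fun i => TVal M S (fun e : Empty => e.elim)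
        ((![constT F01.ca, constT F01.cb] : Fin 2 → L01.Term Empty) i)) = ![aM, bM] := by
      funext i
      fin_cases i <;>
        simp only [Fin.zero_eta, Fin.mk_one, Matrix.cons_val_zero, Matrix.cons_val_one, Matrix.head_cons, TVal_def,
          constT, Term.realize_func, haM, hbM] <;>
        · exact congrArg (@Structure.funMap L01 M S 0 _) (hzeroarg _ _)
    rw [e] at hreal'
    exact hreal'
  have hbf : leM bM (fM bM) := by
    obtain ⟨l, hl, hreal⟩ := hG _ (Set.mem_insert_of_mem _ rfl)
    simp only [List.mem_cons, List.not_mem_nil, or_false] at hl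
    subst hl
    have hreal' : @Structure.RelMap L01 M S 2 R01.le
        (fun i => TVal M S (fun e : Empty => e.elim)
          ((![constT F01.cb, Term.func F01.ff ![constT F01.cb] ] :
            Fin 2 → L01.Term Empty) i)) := hreal
    have e : (fun i => TVal M S (fun e : Empty => e.elim)
        ((![constT F01.cb, Term.func F01.ff ![constT F01.cb] ] :
          Fin 2 → L01.Term Empty) i)) = ![bM, fM bM] := by
      funext i
      fin_cases i
      · simp only [Fin.zero_eta, Fin.mk_one, Matrix.cons_val_zero, TVal_def, constT, Term.realize_func, hbM]
        exact congrArg (@Structure.funMap L01 M S 0 F01.cb) (hzeroarg _ _)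
      · simp only [Fin.zero_eta, Fin.mk_one, Matrix.cons_val_one, Matrix.head_cons, TVal_def, constT, Term.realize_func,
          hfM, hbM]
        exact congrArg (@Structure.funMap L01 M S 1 F01.ff) (funext fun i => by
          fin_cases i
          exact congrArg (@Structure.funMap L01 M S 0 F01.cb) (hzeroarg _ _))
    rw [e] at hreal'
    exact hreal'
  -- induction
  have key : ∀ j, leM bM (GVal M S (fpow j)) := by
    intro j
    induction j with
    | zero => rw [hg0]; exact h1 bM
    | succ j ih =>
        rw [hgs j]
        exact htr _ _ _ hbf (hmon _ _ ih)
  rw [realize_leSent]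
  have : GVal M S (constT F01.ca) = aM := by
    rw [GVal_def]
    show @Structure.funMap L01 M S 0 F01.ca _ = aM
    rw [haM]; congr 1; exact hzeroarg _ _
  rw [this]
  exact htr _ _ _ hab (key n)

end Aux5
section Aux5

/-- The kept symbols. -/
def Keep01 : Set (Sym L01) := baseSyms ∪ {⟨1, F01.ff⟩, ⟨0, F01.ca⟩}

lemma notin_Keep_cb : (⟨0, F01.cb⟩ : Sym L01) ∉ Keep01 := by
  intro h
  rcases h with h | h
  · exact notin_base_cb h
  · simp only [Set.mem_insert_iff, Set.mem_singleton_iff] at h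
    rcases h with h | h
    · rw [Sigma.ext_iff] at h
      exact absurd h.1 (by norm_num)
    · rw [Sigma.ext_iff] at h
      exact F01.noConfusion rfl h.2

/-- The order-isomorphism between the two families of values. -/
noncomputable def gg (k : ℕ) (x : ℝ) : ℝ := if x ≤ 1/4 then 3/2^k * x else 2*x - 1

/-- The possible values of terms in the first model. -/
def InD (k : ℕ) (x : ℝ) : Prop :=
  (0 ≤ x ∧ x ≤ 1/4) ∨ ∃ j ≤ k, x = 1/2 + (1/2)^(j+1)

lemma gg_lo (k : ℕ) {x : ℝ} (h : x ≤ 1/4) : gg k x = 3/2^k * x := if_pos h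

lemma gg_hi (k : ℕ) {x : ℝ} (h : ¬ x ≤ 1/4) : gg k x = 2*x - 1 := if_neg h

lemma gamma_gt (j : ℕ) : ¬ (1/2 + (1/2:ℝ)^(j+1) ≤ 1/4) := by
  have : (0:ℝ) < (1/2)^(j+1) := by positivity
  linarith

lemma gg_gamma (k j : ℕ) : gg k (1/2 + (1/2:ℝ)^(j+1)) = (1/2)^j := by
  rw [gg_hi k (gamma_gt j), pow_succ]
  ring

lemma gg_A_lt_gamma (k j : ℕ) (hj : j ≤ k) {x : ℝ} (hx0 : 0 ≤ x) (hx : x ≤ 1/4) :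
    3/2^k * x < (1/2:ℝ)^j := by
  have h1 : (1/2:ℝ)^k ≤ (1/2)^j := pow_le_pow_of_le_one (by norm_num) (by norm_num) hj
  have h2 : (1/2:ℝ)^k = 1/2^k := one_div_pow 2 k
  have h3 : (0:ℝ) < 2^k := by positivity
  have h4 : 3/2^k * x ≤ 3/2^k * (1/4) := by
    apply mul_le_mul_of_nonneg_left hx (by positivity)
  have h5 : (0:ℝ) < (1/2)^j := by positivity
  have h7 : 3/2^k * (1/4 : ℝ) = (3/4)*((1/2:ℝ)^k) := by rw [h2]; ring
  linarith

lemma gg_mono (k : ℕ) {x y : ℝ} (hx : InD k x) (hy : InD k y) :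
    x ≤ y ↔ gg k x ≤ gg k y := by
  rcases hx with ⟨hx0, hx14⟩ | ⟨j, hj, rfl⟩
  · rcases hy with ⟨hy0, hy14⟩ | ⟨j, hj, rfl⟩
    · rw [gg_lo k hx14, gg_lo k hy14]
      have h3 : (0:ℝ) < 3/2^k := by positivity
      exact ⟨fun h => by nlinarith, fun h => by nlinarith⟩
    · have hlt : x < 1/2 + (1/2:ℝ)^(j+1) := by
        have : (0:ℝ) < (1/2)^(j+1) := by positivity
        linarith
      rw [gg_lo k hx14, gg_gamma k j]
      exact iff_of_true hlt.le (gg_A_lt_gamma k j hj hx0 hx14).le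
  · rw [gg_gamma k j]
    rcases hy with ⟨hy0, hy14⟩ | ⟨j', hj', rfl⟩
    · have hlt : y < 1/2 + (1/2:ℝ)^(j+1) := by
        have : (0:ℝ) < (1/2)^(j+1) := by positivity
        linarith
      rw [gg_lo k hy14]
      exact iff_of_false (not_le.2 hlt) (not_le.2 (gg_A_lt_gamma k j hj hy0 hy14))
    · rw [gg_gamma k j']
      constructor
      · intro h
        have : (1/2:ℝ)^(j'+1) ≥ (1/2)^(j+1) := by linarith
        have hj2 : j' ≤ j := by
          by_contra hc
          push_neg at hc
          have := pow_lt_pow_right_of_lt_one₀ (by norm_num : (0:ℝ) < 1/2)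
            (by norm_num : (1/2:ℝ) < 1) (by omega : j + 1 < j' + 1)
          linarith
        exact pow_le_pow_of_le_one (by norm_num) (by norm_num) hj2
      · intro h
        have hj2 : j' ≤ j := by
          by_contra hc
          push_neg at hc
          have := pow_lt_pow_right_of_lt_one₀ (by norm_num : (0:ℝ) < 1/2)
            (by norm_num : (1/2:ℝ) < 1) (by omega : j < j')
          linarith
        have : (1/2:ℝ)^(j+1) ≤ (1/2)^(j'+1) :=
          pow_le_pow_of_le_one (by norm_num) (by norm_num) (by omega)
        linarith

lemma gg_inj (k : ℕ) {x y : ℝ} (hx : InD k x) (hy : InD k y) :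
    x = y ↔ gg k x = gg k y := by
  constructor
  · rintro rfl; rfl
  · intro h
    exact le_antisymm ((gg_mono k hx hy).2 h.le) ((gg_mono k hy hx).2 h.ge)

lemma tval_cast {M : Type} (S : L01.Structure M) (v : Empty ⊕ Fin 0 → M) (t : GTerm L01) :
    TVal M S v (GTerm.cast t) = GVal M S t := by
  rw [TVal_def, GVal_def, GTerm.cast, Term.realize_relabel]
  congr 1
  funext e
  exact e.elim

lemma subterms_arg {α : Type} {n : ℕ} (f : L01.Functions n) (ts : Fin n → L01.Term α)
    (i : Fin n) {s : L01.Term α} (h : s ∈ subterms (ts i)) : s ∈ subterms (Term.func f ts) :=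
  Set.mem_insert_iff.2 (Or.inr (Set.mem_iUnion.2 ⟨i, h⟩))

lemma f1_lo {x : UnitI} (h : (x : ℝ) < 1/2) : (f1 x : ℝ) = x/2 := by
  unfold f1; rw [if_pos h]

lemma cast_fpow_succ (j : ℕ) (ts : Fin 1 → L01.Term (Empty ⊕ Fin 0))
    (h : ts 0 = GTerm.cast (fpow j)) :
    Term.func F01.ff ts = GTerm.cast (L := L01) (fpow (j+1)) := by
  show _ = Term.relabel Empty.elim (Term.func F01.ff ![fpow j])
  show Term.func F01.ff ts = Term.func F01.ff fun i => Term.relabel Empty.elim (![fpow j] i)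
  congr 1
  funext i
  rw [Subsingleton.elim i 0, h]
  rfl

lemma cast_fpow_zero (ts : Fin 0 → L01.Term (Empty ⊕ Fin 0)) :
    Term.func F01.one ts = GTerm.cast (L := L01) (fpow 0) := by
  show Term.func F01.one ts = Term.func F01.one fun i => Term.relabel Empty.elim _
  congr 1
  funext i
  exact i.elim0

/-- The main term invariant. -/
lemma term_inv (k : ℕ) (v1 v2 : Empty ⊕ Fin 0 → UnitI) :
    ∀ t : L01.Term (Empty ⊕ Fin 0), termSyms t ⊆ Keep01 →
      GTerm.cast (fpow (k+1)) ∉ subterms t →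
      ((0 ≤ (TVal UnitI S1 v1 t : ℝ) ∧ (TVal UnitI S1 v1 t : ℝ) ≤ 1/4 ∧
        (TVal UnitI (S2 k) v2 t : ℝ) = 3/2^k * (TVal UnitI S1 v1 t : ℝ))
       ∨ ∃ j ≤ k, t = GTerm.cast (fpow j)) := by
  intro t
  induction t with
  | var a =>
      rcases a with e | i
      · exact e.elim
      · exact i.elim0
  | func f ts ih =>
      intro hsyms hnot
      have hsub : ∀ i, termSyms (ts i) ⊆ Keep01 := fun i s hs =>
        hsyms (Set.mem_insert_iff.2 (Or.inr (Set.mem_iUnion.2 ⟨i, hs⟩)))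
      have hnot' : ∀ i, GTerm.cast (fpow (k+1)) ∉ subterms (ts i) := fun i h =>
        hnot (subterms_arg f ts i h)
      cases f with
      | zero =>
          left
          have e1 : TVal UnitI S1 v1 (Term.func F01.zero ts) = (⟨0, by norm_num⟩ : UnitI) := rfl
          have e2 : TVal UnitI (S2 k) v2 (Term.func F01.zero ts) =
            (⟨0, by norm_num⟩ : UnitI) := rfl
          rw [e1, e2]
          norm_num
      | one => exact Or.inr ⟨0, Nat.zero_le k, cast_fpow_zero ts⟩
      | ca =>
          left
          have e1 : TVal UnitI S1 v1 (Term.func F01.ca ts) = a1 := rfl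
          have e2 : TVal UnitI (S2 k) v2 (Term.func F01.ca ts) = a2 k := rfl
          rw [e1, e2]
          have h2 : (0:ℝ) < 2^k := by positivity
          refine ⟨by norm_num [a1], by norm_num [a1], ?_⟩
          show (3/2^(k+2) : ℝ) = 3/2^k * (1/4 : ℝ)
          rw [pow_add]
          field_simp
          ring
      | cb => exact absurd (hsyms (Set.mem_insert _ _)) notin_Keep_cb
      | ff =>
          have e1 : TVal UnitI S1 v1 (Term.func F01.ff ts) = f1 (TVal UnitI S1 v1 (ts 0)) := rfl
          have e2 : TVal UnitI (S2 k) v2 (Term.func F01.ff ts) =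
            f2 (TVal UnitI (S2 k) v2 (ts 0)) := rfl
          rcases ih 0 (hsub 0) (hnot' 0) with ⟨h0, h14, he⟩ | ⟨j, hj, hts0⟩
          · left
            rw [e1, e2]
            rw [f1_lo (by linarith : ((TVal UnitI S1 v1 (ts 0) : UnitI) : ℝ) < 1/2)]
            have e3 : (f2 (TVal UnitI (S2 k) v2 (ts 0)) : ℝ) =
              ((TVal UnitI (S2 k) v2 (ts 0) : UnitI) : ℝ)/2 := rfl
            rw [e3, he]
            refine ⟨by linarith, by linarith, by ring⟩
          · rcases Nat.lt_or_ge j k with hjk | hjk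
            · exact Or.inr ⟨j + 1, by omega, (cast_fpow_succ j ts hts0).symm ▸ rfl⟩
            · exfalso
              have hjeq : j = k := le_antisymm hj hjk
              subst hjeq
              exact hnot ((cast_fpow_succ j ts hts0) ▸ Set.mem_insert _ _)

/-- Unified form of the invariant. -/
lemma term_Q (k : ℕ) (v1 v2 : Empty ⊕ Fin 0 → UnitI) (t : L01.Term (Empty ⊕ Fin 0))
    (hsyms : termSyms t ⊆ Keep01) (hnot : GTerm.cast (fpow (k+1)) ∉ subterms t) :
    InD k (TVal UnitI S1 v1 t : ℝ) ∧
      ((TVal UnitI (S2 k) v2 t : ℝ) = gg k (TVal UnitI S1 v1 t : ℝ)) := by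
  rcases term_inv k v1 v2 t hsyms hnot with ⟨h0, h14, he⟩ | ⟨j, hj, rfl⟩
  · exact ⟨Or.inl ⟨h0, h14⟩, by rw [gg_lo k h14, he]⟩
  · rw [tval_cast, tval_cast, gval_fpow_S1 j, gval_fpow_S2 k j]
    exact ⟨Or.inr ⟨j, hj, rfl⟩, (gg_gamma k j).symm⟩

end Aux5
section Aux5

lemma S1_rel (x : Fin 2 → UnitI) :
    @Structure.RelMap L01 UnitI S1 2 R01.le x ↔ x 0 ≤ x 1 := Iff.rfl

lemma S2_rel (k : ℕ) (x : Fin 2 → UnitI) :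
    @Structure.RelMap L01 UnitI (S2 k) 2 R01.le x ↔ x 0 ≤ x 1 := Iff.rfl

/-- Truth transfer between the two models for quantifier-free sentences avoiding
`f^(k+1)(1)`. -/
lemma qf_transfer (k : ℕ) {φ : L01.BoundedFormula Empty 0} (h : φ.IsQF) :
    bfSyms φ ⊆ Keep01 → fpow (k+1) ∉ bfGTerms φ →
    ∀ xs : Fin 0 → UnitI,
      (@BoundedFormula.Realize L01 UnitI S1 Empty 0 φ (fun e => e.elim) xs ↔
       @BoundedFormula.Realize L01 UnitI (S2 k) Empty 0 φ (fun e => e.elim) xs) := by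
  induction h with
  | falsum => intro _ _ _; exact Iff.rfl
  | of_isAtomic h =>
      cases h with
      | equal t u =>
          intro hsyms hg xs
          have ht : termSyms t ⊆ Keep01 := fun s hs => hsyms (Or.inl hs)
          have hu : termSyms u ⊆ Keep01 := fun s hs => hsyms (Or.inr hs)
          have hgt : GTerm.cast (fpow (k+1)) ∉ subterms t := fun hmem => hg (Or.inl hmem)
          have hgu : GTerm.cast (fpow (k+1)) ∉ subterms u := fun hmem => hg (Or.inr hmem)
          obtain ⟨hIt, hEt⟩ := term_Q k (Sum.elim (fun e : Empty => e.elim) xs)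
            (Sum.elim (fun e : Empty => e.elim) xs) t ht hgt
          obtain ⟨hIu, hEu⟩ := term_Q k (Sum.elim (fun e : Empty => e.elim) xs)
            (Sum.elim (fun e : Empty => e.elim) xs) u hu hgu
          show (TVal UnitI S1 (Sum.elim (fun e : Empty => e.elim) xs) t =
              TVal UnitI S1 (Sum.elim (fun e : Empty => e.elim) xs) u) ↔
            (TVal UnitI (S2 k) (Sum.elim (fun e : Empty => e.elim) xs) t =
              TVal UnitI (S2 k) (Sum.elim (fun e : Empty => e.elim) xs) u)
          rw [Subtype.ext_iff, Subtype.ext_iff, hEt, hEu]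
          exact gg_inj k hIt hIu
      | rel R ts =>
          cases R
          intro hsyms hg xs
          have hts : ∀ i, termSyms (ts i) ⊆ Keep01 := fun i s hs =>
            hsyms (Set.mem_iUnion.2 ⟨i, hs⟩)
          have hgs : ∀ i, GTerm.cast (fpow (k+1)) ∉ subterms (ts i) := fun i hmem =>
            hg ⟨i, hmem⟩
          obtain ⟨hI0, hE0⟩ := term_Q k (Sum.elim (fun e : Empty => e.elim) xs)
            (Sum.elim (fun e : Empty => e.elim) xs) (ts 0) (hts 0) (hgs 0)
          obtain ⟨hI1, hE1⟩ := term_Q k (Sum.elim (fun e : Empty => e.elim) xs)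
            (Sum.elim (fun e : Empty => e.elim) xs) (ts 1) (hts 1) (hgs 1)
          show (TVal UnitI S1 (Sum.elim (fun e : Empty => e.elim) xs) (ts 0) ≤
              TVal UnitI S1 (Sum.elim (fun e : Empty => e.elim) xs) (ts 1)) ↔
            (TVal UnitI (S2 k) (Sum.elim (fun e : Empty => e.elim) xs) (ts 0) ≤
              TVal UnitI (S2 k) (Sum.elim (fun e : Empty => e.elim) xs) (ts 1))
          rw [← Subtype.coe_le_coe, ← Subtype.coe_le_coe, hE0, hE1]
          exact gg_mono k hI0 hI1
  | imp h1 h2 ih1 ih2 =>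
      intro hsyms hg xs
      simp only [BoundedFormula.realize_imp]
      rw [ih1 (fun s hs => hsyms (Or.inl hs)) (fun hm => hg (Or.inl hm)) xs,
        ih2 (fun s hs => hsyms (Or.inr hs)) (fun hm => hg (Or.inr hm)) xs]

/-- Part (ii). -/
lemma part_ii (ψ : L01.Sentence) (hqf : ψ.IsQF) (hsyms : sentSyms ψ ⊆ Keep01) (k : ℕ)
    (hk : fpow (k+1) ∉ sentGTerms ψ) (hent : EntailsC T01 K01 G01 ψ) :
    ¬ EntailsS T01 K01 ψ (leSent (constT F01.ca) (fpow (k+1))) := by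
  intro hE
  have hne : Nonempty UnitI := ⟨⟨0, by norm_num⟩⟩
  have hψ1 : RealizeSent UnitI S1 ψ :=
    hent UnitI S1 hne (modelsT_S3 _ _ _) (modelsK_S3 _ _ _ f1_mono f1_le_one) modelsG_S1
  have hψ2 : RealizeSent UnitI (S2 k) ψ := by
    rw [RealizeSent_def] at hψ1 ⊢
    unfold Formula.Realize at hψ1 ⊢
    exact (qf_transfer k hqf hsyms hk default).1 hψ1
  have hfin := hE UnitI (S2 k) hne (modelsT_S3 _ _ _)
    (modelsK_S3 _ _ _ f2_mono f2_le_one) hψ2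
  rw [realize_leSent, S2_rel] at hfin
  simp only [Matrix.cons_val_zero, Matrix.cons_val_one, Matrix.head_cons] at hfin
  have hA : GVal UnitI (S2 k) (constT F01.ca) = a2 k := rfl
  rw [hA] at hfin
  have hcoe : ((a2 k : UnitI) : ℝ) ≤ ((GVal UnitI (S2 k) (fpow (k+1)) : UnitI) : ℝ) := hfin
  rw [gval_fpow_S2 k (k+1)] at hcoe
  have hav : ((a2 k : UnitI) : ℝ) = 3/2^(k+2) := rfl
  rw [hav] at hcoe
  have h1 : (1/2:ℝ)^(k+1) = 1/2^(k+1) := one_div_pow 2 (k+1)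
  have h2 : (2:ℝ)^(k+2) = 2^(k+1) * 2 := pow_succ 2 (k+1)
  have h3 : (0:ℝ) < 2^(k+1) := by positivity
  rw [h1] at hcoe
  rw [h2] at hcoe
  have : (3:ℝ)/(2^(k+1) * 2) ≤ 1/2^(k+1) := hcoe
  have h4 : (3:ℝ)/(2^(k+1) * 2) = (3/2) * (1/2^(k+1)) := by field_simp
  have h5 : (0:ℝ) < 1/2^(k+1) := by positivity
  rw [h4] at this
  nlinarith

end Aux5
section Aux5

/-- Depth of a term. -/
def tdepth {α : Type} : L01.Term α → ℕ
  | .var _ => 0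
  | .func _ ts => 1 + Finset.univ.sup (fun i => tdepth (ts i))

lemma tdepth_subterm {α : Type} : ∀ (t s : L01.Term α), s ∈ subterms t → tdepth s ≤ tdepth t := by
  intro t
  induction t with
  | var a =>
      intro s hs
      rw [show s = Term.var a from hs]
  | func f ts ih =>
      intro s hs
      rcases Set.mem_insert_iff.1 hs with rfl | hs
      · exact le_refl _
      · obtain ⟨i, hi⟩ := Set.mem_iUnion.1 hs
        calc tdepth s ≤ tdepth (ts i) := ih i s hi
        _ ≤ Finset.univ.sup (fun i => tdepth (ts i)) :=
          Finset.le_sup (f := fun i => tdepth (ts i)) (Finset.mem_univ i)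
        _ ≤ tdepth (Term.func f ts) := by rw [tdepth]; omega

lemma tdepth_relabel {α β : Type} (g : α → β) :
    ∀ t : L01.Term α, tdepth (Term.relabel g t) = tdepth t := by
  intro t
  induction t with
  | var a => rfl
  | func f ts ih =>
      show 1 + Finset.univ.sup (fun i => tdepth (Term.relabel g (ts i))) = _
      rw [tdepth]
      congr 1
      exact Finset.sup_congr rfl fun i _ => ih i

lemma tdepth_fpow : ∀ j : ℕ, tdepth (fpow j) = j + 1 := by
  intro j
  induction j with
  | zero => simp [fpow, constT, tdepth]
  | succ j ih =>
      show tdepth (Term.func F01.ff ![fpow j]) = j + 2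
      show 1 + Finset.univ.sup (fun i : Fin 1 => tdepth (![fpow j] i)) = j + 2
      have : Finset.univ.sup (fun i : Fin 1 => tdepth (![fpow j] i)) = tdepth (fpow j) := by
        rw [Finset.univ_unique, Finset.sup_singleton]
        simp
      rw [this, ih]
      omega

lemma tdepth_cast {α : Type} (t : GTerm L01) :
    tdepth (GTerm.cast t : L01.Term α) = tdepth t := tdepth_relabel _ t

lemma bfGTerms_bound : ∀ {n : ℕ} (φ : L01.BoundedFormula Empty n),
    ∃ N : ℕ, ∀ g ∈ bfGTerms φ, tdepth g ≤ N := by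
  intro n φ
  induction φ with
  | falsum => exact ⟨0, fun g hg => absurd hg (Set.notMem_empty _)⟩
  | equal t u =>
      refine ⟨max (tdepth t) (tdepth u), fun g hg => ?_⟩
      rcases hg with hg | hg
      · have := tdepth_subterm t _ hg
        rw [tdepth_cast] at this
        omega
      · have := tdepth_subterm u _ hg
        rw [tdepth_cast] at this
        omega
  | rel R ts =>
      refine ⟨Finset.univ.sup (fun i => tdepth (ts i)), fun g hg => ?_⟩
      obtain ⟨i, hi⟩ := hg
      have := tdepth_subterm (ts i) _ hi
      rw [tdepth_cast] at this
      exact le_trans this (Finset.le_sup (f := fun i => tdepth (ts i)) (Finset.mem_univ i))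
  | imp f g ihf ihg =>
      obtain ⟨N1, h1⟩ := ihf
      obtain ⟨N2, h2⟩ := ihg
      refine ⟨max N1 N2, fun g hg => ?_⟩
      rcases hg with hg | hg
      · exact le_trans (h1 _ hg) (le_max_left _ _)
      · exact le_trans (h2 _ hg) (le_max_right _ _)
  | all f ihf =>
      obtain ⟨N, h⟩ := ihf
      exact ⟨N, fun g hg => h _ hg⟩

lemma termSyms_relabel {α β : Type} (g : α → β) :
    ∀ t : L01.Term α, termSyms (Term.relabel g t) = termSyms t := by
  intro t
  induction t with
  | var a => rfl
  | func f ts ih =>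
      show insert (⟨_, f⟩ : Sym L01) (⋃ i, termSyms (Term.relabel g (ts i))) = _
      rw [termSyms]
      congr 1
      exact Set.iUnion_congr fun i => ih i

lemma fpow_syms : ∀ m : ℕ, termSyms (fpow m) ⊆ Keep01 := by
  intro m
  induction m with
  | zero =>
      intro s hs
      rcases Set.mem_insert_iff.1 hs with rfl | hs
      · exact Or.inl (Or.inr rfl)
      · obtain ⟨i, _⟩ := Set.mem_iUnion.1 hs
        exact i.elim0
  | succ m ih =>
      intro s hs
      rcases Set.mem_insert_iff.1 hs with rfl | hs
      · exact Or.inr (Or.inl rfl)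
      · obtain ⟨i, hi⟩ := Set.mem_iUnion.1 hs
        rw [Subsingleton.elim i 0] at hi
        exact ih hi

lemma constT_ca_syms : termSyms (constT F01.ca) ⊆ Keep01 := by
  intro s hs
  rcases Set.mem_insert_iff.1 hs with rfl | hs
  · exact Or.inr (Or.inr rfl)
  · obtain ⟨i, _⟩ := Set.mem_iUnion.1 hs
    exact i.elim0

lemma leSent_syms (m : ℕ) : sentSyms (leSent (constT F01.ca) (fpow m)) ⊆ Keep01 := by
  intro s hs
  simp only [leSent, sentSyms, bfSyms, Set.mem_iUnion] at hs
  obtain ⟨i, hi⟩ := hs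
  rcases mem_termSyms_pair s _ _ i hi with h | h
  · rw [termSyms_relabel] at h
    exact constT_ca_syms h
  · rw [termSyms_relabel] at h
    exact fpow_syms m h

/-- Part (iii). -/
lemma part_iii : ¬ ∃ ψ : L01.Sentence, IsGUIg T01 K01 G01 Keep01 ψ := by
  rintro ⟨ψ, hqf, hsyms, hent, hmax⟩
  obtain ⟨N, hN⟩ := bfGTerms_bound ψ
  have hknot : fpow (N+1) ∉ sentGTerms ψ := by
    intro hmem
    have := hN _ hmem
    rw [tdepth_fpow] at this
    omega
  have hθqf : (leSent (constT F01.ca) (fpow (N+1))).IsQF :=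
    (BoundedFormula.IsAtomic.rel _ _).isQF
  have hθs : sentSyms (leSent (constT F01.ca) (fpow (N+1))) ∩ GSyms G01 ⊆ Keep01 :=
    fun s hs => leSent_syms _ hs.1
  have hES := hmax _ hθqf hθs (part_i (N+1))
  exact part_ii ψ hqf hsyms N hknot hent hES

end Aux5
/-- With `T = LI([0,1]) ∪ {Mon_f, ∀x (f(x) ≤ 1)}` and
`G = (a ≤ b) ∧ (b ≤ f(b))`:
(i) `G ⊨_T a ≤ fⁿ(1)` for all `n`;
(ii) for every quantifier-free formula `ψ` over the base signature extended with `f` and `a`,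
if `f^{k+1}(1)` does not occur in `ψ` and `G ⊨_T ψ`, then `ψ ⊭_T a ≤ f^{k+1}(1)`;
hence (iii) `G` has no `T`-general uniform interpolant w.r.t. `{f, a}`. -/
theorem no_general_uniform_interpolant_monotone_bounded :
    (∀ n : ℕ, EntailsC T01 K01 G01 (leSent (constT F01.ca) (fpow n))) ∧
    (∀ (ψ : L01.Sentence), ψ.IsQF →
        sentSyms ψ ⊆ baseSyms ∪ {⟨1, F01.ff⟩, ⟨0, F01.ca⟩} →
        ∀ k : ℕ, fpow (k + 1) ∉ sentGTerms ψ →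
          EntailsC T01 K01 G01 ψ →
          ¬ EntailsS T01 K01 ψ (leSent (constT F01.ca) (fpow (k + 1)))) ∧
    ¬ ∃ ψ : L01.Sentence, IsGUIg T01 K01 G01 (baseSyms ∪ {⟨1, F01.ff⟩, ⟨0, F01.ca⟩}) ψ := by
  exact ⟨part_i, fun ψ hqf hsyms k hk hent => part_ii ψ hqf hsyms k hk hent, part_iii⟩

end PaperSE
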